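/- arXiv:1311.2154 — 2 statements merged into one kernel-verified Lean document; each statement's English description precedes it below -/
import Mathlib

section
/- Let gcd(r, n) = 1 and suppose (-1)^n a^{(q^n-1)/(q-1)} ≠ 1 in F_{q^n}. Then, viewing a as an element of F_{q^{rn}}, also (-1)^n a^{(q^{rn}-1)/(q^r-1)} ≠ 1; consequently x ↦ x^{q^r} + a x is a bijection of F_{q^{rn}}. -/
lemma aux_geom (b n : ℕ) (hb : 1 ≤ b) :
    (∑ i ∈ Finset.range n, b ^ i) * (b - 1) = b ^ n - 1 := by
  have h1 : (1 : ℕ) ≤ b ^ n := Nat.one_le_pow _ _ hb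
  have h := geom_sum_mul (b : ℤ) n
  have h2 : (((∑ i ∈ Finset.range n, b ^ i) * (b - 1) : ℕ) : ℤ) = ((b ^ n - 1 : ℕ) : ℤ) := by
    push_cast [Nat.cast_sub hb, Nat.cast_sub h1]
    simpa using h
  exact_mod_cast h2

lemma aux_perm {M : Type*} [AddCommMonoid M] (n r : ℕ) (hn : 0 < n) (hco : Nat.gcd r n = 1)
    (g : ℕ → M) :
    ∑ i ∈ Finset.range n, g (r * i % n) = ∑ i ∈ Finset.range n, g i := by
  obtain ⟨s, hs⟩ : ∃ s, r * s ≡ 1 [MOD n] := by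
    rcases eq_or_lt_of_le (show 1 ≤ n from hn) with h1 | h1
    · exact ⟨1, by simp [Nat.ModEq, ← h1, Nat.mod_one]⟩
    · obtain ⟨b, -, hb⟩ := Nat.exists_mul_mod_eq_one_of_coprime hco h1
      exact ⟨b, by unfold Nat.ModEq; rw [hb, Nat.mod_eq_of_lt h1]⟩
  have key : ∀ u v : ℕ, u * v ≡ 1 [MOD n] → ∀ i < n, v * (u * i % n) % n = i := by
    intro u v huv i hi
    have h1 : v * (u * i % n) ≡ u * v * i [MOD n] := by
      calc v * (u * i % n) ≡ v * (u * i) [MOD n] := (Nat.mod_modEq _ n).mul_left v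
        _ = u * v * i := by ring
    have h2 : u * v * i ≡ 1 * i [MOD n] := huv.mul_right i
    have h3 : v * (u * i % n) ≡ i [MOD n] := h1.trans (by simpa using h2)
    simpa [Nat.ModEq, Nat.mod_eq_of_lt hi] using h3
  have hsr : s * r ≡ 1 [MOD n] := by rwa [Nat.mul_comm] at hs
  refine Finset.sum_nbij' (fun i => r * i % n) (fun j => s * j % n) ?_ ?_ ?_ ?_ ?_
  · intro i hi; exact Finset.mem_range.mpr (Nat.mod_lt _ hn)
  · intro j hj; exact Finset.mem_range.mpr (Nat.mod_lt _ hn)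
  · intro i hi; exact key r s hs i (Finset.mem_range.mp hi)
  · intro j hj; exact key s r hsr j (Finset.mem_range.mp hj)
  · intro i hi; rfl

lemma aux_parity (b n : ℕ) (hb : b % 2 = 1) : (∑ i ∈ Finset.range n, b ^ i) % 2 = n % 2 := by
  induction n with
  | zero => simp
  | succ n ih =>
    rw [Finset.sum_range_succ]
    have hbn : b ^ n % 2 = 1 := by rw [Nat.pow_mod, hb, one_pow]; rfl
    omega

set_option maxHeartbeats 1000000 in
/-- If `gcd(r,n) = 1` and `(-1)^n a^{(q^n-1)/(q-1)} ≠ 1` in `F_{q^n}`, then viewing `a` in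
`F_{q^{rn}}` one also has `(-1)^n a^{(q^{rn}-1)/(q^r-1)} ≠ 1`; consequently
`x ↦ x^{q^r} + a x` is a bijection of `F_{q^{rn}}`. -/
theorem stmt_9 (q n r : ℕ) (hq : IsPrimePow q) (hn : 0 < n) (hr : 0 < r)
    (hco : Nat.gcd r n = 1)
    (K L : Type*) [Field K] [Field L] [Fintype K] [Fintype L] [Algebra K L]
    (hK : Fintype.card K = q ^ n) (hL : Fintype.card L = q ^ (r * n))
    (a : K) (hcond : (-1 : K) ^ n * a ^ ((q ^ n - 1) / (q - 1)) ≠ 1) :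
    (-1 : L) ^ n * (algebraMap K L a) ^ ((q ^ (r * n) - 1) / (q ^ r - 1)) ≠ 1 ∧
    Function.Bijective (fun x : L => x ^ q ^ r + algebraMap K L a * x) := by
  obtain ⟨p, k, hp', hk, hpk⟩ := hq
  have hp : p.Prime := Nat.prime_iff.mpr hp'
  have hq2 : 2 ≤ q := by
    rw [← hpk]
    calc 2 ≤ p := hp.two_le
      _ = p ^ 1 := (pow_one p).symm
      _ ≤ p ^ k := Nat.pow_le_pow_right hp.pos hk
  have hq1 : 1 ≤ q := by omega
  have hqr2 : 2 ≤ q ^ r := by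
    calc 2 = 2 ^ 1 := rfl
      _ ≤ 2 ^ r := Nat.pow_le_pow_right (by norm_num) hr
      _ ≤ q ^ r := Nat.pow_le_pow_left hq2 r
  have hqr1 : 1 ≤ q ^ r := by omega
  set S1 := ∑ i ∈ Finset.range n, q ^ i with hS1
  set Sr := ∑ i ∈ Finset.range n, (q ^ r) ^ i with hSr
  -- the divisions are the geometric sums
  have hgeom1 : S1 * (q - 1) = q ^ n - 1 := aux_geom q n hq1
  have hgeomr : Sr * (q ^ r - 1) = q ^ (r * n) - 1 := by
    rw [pow_mul]; exact aux_geom (q ^ r) n hqr1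
  have hM : (q ^ n - 1) / (q - 1) = S1 := by
    rw [← hgeom1, Nat.mul_div_cancel _ (by omega)]
  have hN : (q ^ (r * n) - 1) / (q ^ r - 1) = Sr := by
    rw [← hgeomr, Nat.mul_div_cancel _ (by omega)]
  -- key congruence
  have hcong : Sr ≡ S1 [MOD q ^ n - 1] := by
    rw [← ZMod.natCast_eq_natCast_iff]
    set m := q ^ n - 1 with hm
    have hone : (q : ZMod m) ^ n = 1 := by
      have h1 : ((q ^ n : ℕ) : ZMod m) = ((m + 1 : ℕ) : ZMod m) := by
        congr 1
        have : 1 ≤ q ^ n := Nat.one_le_pow _ _ (by omega)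
        omega
      push_cast at h1
      simpa [ZMod.natCast_self] using h1
    have hmod : ∀ i : ℕ, (q : ZMod m) ^ i = (q : ZMod m) ^ (i % n) := by
      intro i
      conv_lhs => rw [← Nat.div_add_mod i n]
      rw [pow_add, pow_mul, hone, one_pow, one_mul]
    have step1 : ((Sr : ℕ) : ZMod m) = ∑ i ∈ Finset.range n, (q : ZMod m) ^ (r * i % n) := by
      rw [hSr]
      push_cast
      refine Finset.sum_congr rfl fun i _ => ?_
      rw [← pow_mul, hmod]
    have step2 : ((S1 : ℕ) : ZMod m) = ∑ i ∈ Finset.range n, (q : ZMod m) ^ i := by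
      rw [hS1]; push_cast; rfl
    rw [step1, step2]
    exact aux_perm n r hn hco (fun t => (q : ZMod m) ^ t)
  -- positivity of the sums
  have hS1pos : 0 < S1 := Finset.sum_pos (fun i _ => Nat.pow_pos (by omega))
      (Finset.nonempty_range_iff.mpr (by omega))
  have hSrpos : 0 < Sr := Finset.sum_pos (fun i _ => Nat.pow_pos (by omega))
      (Finset.nonempty_range_iff.mpr (by omega))
  -- a^Sr = a^S1 in K
  have hpowa : a ^ Sr = a ^ S1 := by
    by_cases ha : a = 0
    · rw [ha, zero_pow (by omega), zero_pow (by omega)]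
    · have ha1 : a ^ (q ^ n - 1) = 1 := by
        rw [← hK]; exact FiniteField.pow_card_sub_one_eq_one a ha
      have hle : S1 ≤ Sr := by
        refine Finset.sum_le_sum fun i _ => Nat.pow_le_pow_left ?_ i
        calc q = q ^ 1 := (pow_one q).symm
          _ ≤ q ^ r := Nat.pow_le_pow_right (by omega) hr
      have hdvd : q ^ n - 1 ∣ Sr - S1 := (Nat.modEq_iff_dvd' hle).mp hcong.symm
      obtain ⟨c, hc⟩ := hdvd
      have hSc : Sr = S1 + (q ^ n - 1) * c := by omega
      rw [hSc, pow_add, pow_mul, ha1, one_pow, mul_one]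
  set b := algebraMap K L a with hb
  have part1 : (-1 : L) ^ n * b ^ Sr ≠ 1 := by
    intro h
    apply hcond
    rw [hM]
    apply (algebraMap K L).injective
    rw [map_one, map_mul, map_pow, map_pow, map_neg, map_one]
    rw [← map_pow, ← hpowa, map_pow, ← hb]
    exact h
  refine ⟨by rwa [hN], ?_⟩
  -- characteristic of L
  have hfp : Fact p.Prime := ⟨hp⟩
  have hcharL : CharP L p := by
    obtain ⟨m, hm1, hm2⟩ := FiniteField.card L (ringChar L)
    have hc : ringChar L = p := by
      have h1 : ringChar L ∣ p ^ (k * (r * n)) := by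
        rw [pow_mul, hpk, ← hL, hm2]
        exact dvd_pow_self _ m.ne_zero
      exact (Nat.prime_dvd_prime_iff_eq hm1 hp).mp (hm1.dvd_of_dvd_pow h1)
    rw [← hc]; infer_instance
  -- injectivity suffices
  rw [← Finite.injective_iff_bijective]
  intro x y hxy
  simp only at hxy
  have hqrp : q ^ r = p ^ (k * r) := by rw [← hpk, ← pow_mul]
  have hsub : (x - y) ^ q ^ r = x ^ q ^ r - y ^ q ^ r := by
    rw [hqrp]; exact sub_pow_char_pow ..
  set z := x - y with hz
  by_contra hne
  have hzne : z ≠ 0 := sub_ne_zero.mpr hne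
  have h0 : z ^ q ^ r + b * z = 0 := by
    rw [hz, hsub]; linear_combination hxy
  have hz1 : z ^ (q ^ r - 1) = -b := by
    have h1 : z ^ (q ^ r - 1) * z = z ^ q ^ r := by
      rw [← pow_succ]; congr 1; omega
    have h2 : z ^ (q ^ r - 1) * z = -b * z := by rw [h1]; linear_combination h0
    exact mul_right_cancel₀ hzne h2
  have hcard : z ^ ((q ^ r - 1) * Sr) = 1 := by
    rw [mul_comm, hgeomr, ← hL]
    exact FiniteField.pow_card_sub_one_eq_one z hzne
  have hfinal : (-1 : L) ^ Sr * b ^ Sr = 1 := by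
    calc (-1 : L) ^ Sr * b ^ Sr = ((-1) * b) ^ Sr := (mul_pow _ _ _).symm
      _ = (-b) ^ Sr := by rw [neg_one_mul]
      _ = (z ^ (q ^ r - 1)) ^ Sr := by rw [hz1]
      _ = z ^ ((q ^ r - 1) * Sr) := by rw [← pow_mul]
      _ = 1 := hcard
  have hparity : (-1 : L) ^ Sr = (-1 : L) ^ n := by
    rcases hp.eq_two_or_odd' with h2 | hodd
    · have : CharP L 2 := by rwa [h2] at hcharL
      have hneg : (-1 : L) = 1 := by
        have := CharTwo.neg_eq (R := L) 1
        simpa using this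
      rw [hneg, one_pow, one_pow]
    · have hqodd : q % 2 = 1 := by
        rw [← hpk]
        exact Nat.odd_iff.mp (hodd.pow)
      have hqrodd : q ^ r % 2 = 1 := by
        rw [Nat.pow_mod, hqodd, one_pow]; rfl
      have hpar : Sr % 2 = n % 2 := aux_parity (q ^ r) n hqrodd
      rcases Nat.even_or_odd n with he | ho
      · have : Even Sr := Nat.even_iff.mpr (by rw [hpar]; exact Nat.even_iff.mp he)
        rw [this.neg_one_pow, he.neg_one_pow]
      · have : Odd Sr := Nat.odd_iff.mpr (by rw [hpar]; exact Nat.odd_iff.mp ho)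
        rw [this.neg_one_pow, ho.neg_one_pow]
  rw [hparity] at hfinal
  exact part1 hfinal
end

section
/- Suppose gcd(n,r) = d and (-1)^{n/d} a^{(q^n-1)/(q^d-1)} ≠ 1. Then for every y ∈ F_{q^n}, the unique x ∈ F_{q^n} with x^{q^r} + a x = y is x = [N(a)/(N(a)+(-1)^{n/d-1})] · Σ_{i=0}^{n/d-1} (-1)^i a^{-(q^{(i+1)r}-1)/(q^r-1)} y^{q^{ir}}, where N(a) = a^{(q^n-1)/(q^d-1)}. -/
private lemma geom_nat (x k : ℕ) (hx : 1 ≤ x) :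
    (x - 1) * ∑ j ∈ Finset.range k, x ^ j = x ^ k - 1 := by
  induction k with
  | zero => simp
  | succ k ih =>
    rw [Finset.sum_range_succ, Nat.mul_add, ih, pow_succ, Nat.sub_mul, one_mul,
      mul_comm x (x ^ k)]
    have h1 : 1 ≤ x ^ k := Nat.one_le_pow _ _ hx
    have h2 : x ^ k ≤ x ^ k * x := Nat.le_mul_of_pos_right _ hx
    omega

private lemma geom_div (x k : ℕ) (hx : 2 ≤ x) :
    (x ^ k - 1) / (x - 1) = ∑ j ∈ Finset.range k, x ^ j :=
  Nat.div_eq_of_eq_mul_left (by omega) (by rw [mul_comm, geom_nat x k (by omega)])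

private lemma prod_mod_bij {M : Type*} [CommMonoid M] (m r' : ℕ) (hco : Nat.Coprime r' m)
    (f : ℕ → M) :
    ∏ i ∈ Finset.range m, f ((i * r') % m) = ∏ i ∈ Finset.range m, f i := by
  rcases Nat.eq_zero_or_pos m with hm | hm
  · simp [hm]
  set s := r' ^ (m.totient - 1) with hs
  have ht : 1 ≤ m.totient := Nat.totient_pos.mpr hm
  have hrs : r' * s ≡ 1 [MOD m] := by
    have : r' * s = r' ^ m.totient := by
      rw [hs, ← pow_succ']
      congr 1
      omega
    rw [this]
    exact Nat.ModEq.pow_totient hco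
  have key1 : ∀ x ∈ Finset.range m, ((x * r') % m * s) % m = x := by
    intro x hx
    rw [Nat.mod_mul_mod, mul_assoc]
    have := (Nat.ModEq.mul_left x hrs)
    rw [Nat.ModEq] at this
    rw [this, mul_one, Nat.mod_eq_of_lt (Finset.mem_range.mp hx)]
  have key2 : ∀ x ∈ Finset.range m, ((x * s) % m * r') % m = x := by
    intro x hx
    rw [Nat.mod_mul_mod, mul_assoc, mul_comm s r']
    have := (Nat.ModEq.mul_left x hrs)
    rw [Nat.ModEq] at this
    rw [this, mul_one, Nat.mod_eq_of_lt (Finset.mem_range.mp hx)]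
  exact Finset.prod_nbij' (fun x => (x * r') % m) (fun x => (x * s) % m)
    (fun x _ => Finset.mem_range.mpr (Nat.mod_lt _ hm))
    (fun x _ => Finset.mem_range.mpr (Nat.mod_lt _ hm))
    key1 key2 (fun x _ => rfl)

private lemma pow_pow_fix {F : Type*} [Monoid F] (z : F) (c : ℕ) (h : z ^ c = z) :
    ∀ k, z ^ (c ^ k) = z := by
  intro k
  induction k with
  | zero => simp
  | succ k ih => rw [pow_succ, pow_mul, ih, h]

/-- Suppose `gcd(n,r) = d` and `(-1)^{n/d} a^{(q^n-1)/(q^d-1)} ≠ 1`. Then for every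
`y ∈ F_{q^n}`, the unique `x` with `x^{q^r} + a x = y` is
`x = [N(a)/(N(a)+(-1)^{n/d-1})] ∑_{i=0}^{n/d-1} (-1)^i a^{-(q^{(i+1)r}-1)/(q^r-1)} y^{q^{ir}}`,
where `N(a) = a^{(q^n-1)/(q^d-1)}`. -/
theorem stmt_19 (q n r : ℕ) (hq : IsPrimePow q) (hr : 1 ≤ r) (hrn : r ≤ n - 1)
    (d : ℕ) (hd : d = Nat.gcd n r)
    (F : Type*) [Field F] [Fintype F] (hF : Fintype.card F = q ^ n)
    (a : F) (ha : a ≠ 0) (N : F) (hN : N = a ^ ((q ^ n - 1) / (q ^ d - 1)))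
    (hcond : (-1 : F) ^ (n / d) * N ≠ 1) :
    ∀ y : F,
      ((N / (N + (-1) ^ (n / d - 1)) *
            ∑ i ∈ Finset.range (n / d),
              (-1 : F) ^ i * a⁻¹ ^ ((q ^ ((i + 1) * r) - 1) / (q ^ r - 1)) * y ^ q ^ (i * r))
            ^ q ^ r
          + a * (N / (N + (-1) ^ (n / d - 1)) *
            ∑ i ∈ Finset.range (n / d),
              (-1 : F) ^ i * a⁻¹ ^ ((q ^ ((i + 1) * r) - 1) / (q ^ r - 1)) * y ^ q ^ (i * r))
          = y) ∧
      ∀ x : F, x ^ q ^ r + a * x = y →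
        x = N / (N + (-1) ^ (n / d - 1)) *
            ∑ i ∈ Finset.range (n / d),
              (-1 : F) ^ i * a⁻¹ ^ ((q ^ ((i + 1) * r) - 1) / (q ^ r - 1)) * y ^ q ^ (i * r) := by
  -- basic numerics
  have hq2 : 2 ≤ q := hq.two_le
  have hn2 : 2 ≤ n := by omega
  have hd_pos : 0 < d := by rw [hd]; exact Nat.gcd_pos_of_pos_left _ (by omega)
  have hdn : d ∣ n := hd ▸ Nat.gcd_dvd_left n r
  have hdr : d ∣ r := hd ▸ Nat.gcd_dvd_right n r
  set m := n / d with hm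
  set r' := r / d with hr'
  have hn_eq : n = m * d := (Nat.div_mul_cancel hdn).symm
  have hr_eq : r = r' * d := (Nat.div_mul_cancel hdr).symm
  have hdr' : d ≤ r := Nat.le_of_dvd (by omega) hdr
  have hdltn : d < n := by omega
  have hm2 : 2 ≤ m := by
    rcases Nat.lt_or_ge m 2 with h | h
    · interval_cases m <;> omega
    · exact h
  have hcop : Nat.Coprime r' m := by
    have := Nat.coprime_div_gcd_div_gcd (m := n) (n := r) (by rw [← hd]; omega)
    rw [← hd] at this
    exact this.symm
  -- characteristic
  obtain ⟨p, k, hp, hk, hpk⟩ := hq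
  have hpp : p.Prime := Nat.prime_iff.mpr hp
  haveI : CharP F (ringChar F) := ringChar.charP F
  have hp'_prime : (ringChar F).Prime := CharP.char_is_prime F (ringChar F)
  obtain ⟨t, -, hcard⟩ := FiniteField.card F (ringChar F)
  have hp_eq : p = ringChar F := by
    have h1 : p ∣ (ringChar F) ^ (t : ℕ) := by
      rw [← hcard, hF, ← hpk, ← pow_mul]
      exact dvd_pow_self p (by positivity)
    exact (Nat.prime_dvd_prime_iff_eq hpp hp'_prime).mp
      (hpp.dvd_of_dvd_pow h1)
  haveI : ExpChar F (ringChar F) := ExpChar.prime hp'_prime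
  set φ := iterateFrobenius F (ringChar F) (k * r) with hφdef
  have hφ : ∀ z : F, φ z = z ^ q ^ r := by
    intro z
    rw [hφdef, iterateFrobenius_def, ← hp_eq, pow_mul, hpk]
  -- Frobenius fixed point facts
  have hcardF : ∀ z : F, z ^ q ^ n = z := by
    intro z; rw [← hF]; exact FiniteField.pow_card z
  have hfixn : ∀ z : F, ∀ j, z ^ (q ^ n) ^ j = z := fun z => pow_pow_fix z _ (hcardF z)
  have hqmod : ∀ (z : F) (s : ℕ), z ^ q ^ s = z ^ q ^ (s % n) := by
    intro z s
    conv_lhs => rw [← Nat.div_add_mod s n]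
    rw [pow_add, pow_mul q n (s / n), pow_mul z, hfixn]
  have hmr : m * r = n * r' := by rw [hr_eq, hn_eq]; ring
  have hzmr : ∀ z : F, z ^ q ^ (m * r) = z := by
    intro z
    rw [hmr, pow_mul, hfixn]
  -- geometric exponents
  set E : ℕ → ℕ := fun j => ∑ i ∈ Finset.range j, q ^ (i * r) with hE
  have hE1 : E 1 = 1 := by simp [hE]
  have hEstep : ∀ i, E (i + 1) = E i * q ^ r + 1 := by
    intro i
    simp only [hE]
    rw [Finset.sum_range_succ' (fun j => q ^ (j * r)) i]
    simp only [zero_mul, pow_zero]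
    congr 1
    rw [Finset.sum_mul]
    apply Finset.sum_congr rfl
    intro j _
    rw [← pow_add]
    congr 1
    ring
  have hEpos : ∀ i, 1 ≤ E (i + 1) := by intro i; rw [hEstep]; omega
  have hEmpos : 1 ≤ E m := by
    obtain ⟨m', hme⟩ : ∃ m', m = m' + 1 := ⟨m - 1, by omega⟩
    rw [hme]; exact hEpos m'
  have hqr2 : 2 ≤ q ^ r := le_trans hq2 (Nat.le_self_pow (by omega) q)
  have hdiv : ∀ i : ℕ, (q ^ ((i + 1) * r) - 1) / (q ^ r - 1) = E (i + 1) := by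
    intro i
    have h1 : q ^ ((i + 1) * r) = (q ^ r) ^ (i + 1) := by rw [← pow_mul, mul_comm]
    rw [h1, geom_div _ _ hqr2, hE]
    apply Finset.sum_congr rfl
    intro j _
    rw [← pow_mul, mul_comm]
  -- N as power of a
  have hqd2 : 2 ≤ q ^ d := le_trans hq2 (Nat.le_self_pow (by omega) q)
  have hNval : N = a ^ (∑ i ∈ Finset.range m, q ^ (i * d)) := by
    rw [hN]
    congr 1
    have h1 : q ^ n = (q ^ d) ^ m := by rw [← pow_mul, mul_comm, ← hn_eq]
    rw [h1, geom_div _ _ hqd2]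
    apply Finset.sum_congr rfl
    intro j _
    rw [← pow_mul, mul_comm]
  -- key identity (B): a ^ E m = N
  have hEm : a ^ E m = N := by
    rw [hE, ← Finset.prod_pow_eq_pow_sum, hNval, ← Finset.prod_pow_eq_pow_sum]
    have step : ∀ i : ℕ, a ^ q ^ (i * r) = (fun j => a ^ q ^ (j * d)) ((i * r') % m) := by
      intro i
      rw [hqmod a (i * r)]
      congr 2
      calc i * r % n = i * r' * d % (m * d) := by rw [hr_eq, hn_eq, mul_assoc]
        _ = i * r' % m * d := Nat.mul_mod_mul_right d (i * r') m
    calc ∏ i ∈ Finset.range m, a ^ q ^ (i * r)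
        = ∏ i ∈ Finset.range m, (fun j => a ^ q ^ (j * d)) ((i * r') % m) :=
          Finset.prod_congr rfl (fun i _ => step i)
      _ = ∏ i ∈ Finset.range m, a ^ q ^ (i * d) := prod_mod_bij m r' hcop (fun j => a ^ q ^ (j * d))
  have hNne : N ≠ 0 := by rw [hN]; exact pow_ne_zero _ ha
  -- N is fixed by q^r-Frobenius
  have hexp1 : E m * q ^ r = (E m - 1) + q ^ (m * r) := by
    have h1 := hEstep m
    have h2 : E (m + 1) = E m + q ^ (m * r) := by
      rw [hE]; exact Finset.sum_range_succ _ m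
    omega
  have hNfrob : N ^ q ^ r = N := by
    rw [← hEm, ← pow_mul, hexp1, pow_add, hzmr a, ← pow_succ]
    congr 1
    omega
  have hφN : φ N = N := by rw [hφ, hNfrob]
  -- nonvanishing of denominator
  have hm1 : (-1 : F) ^ m = -(-1 : F) ^ (m - 1) := by
    conv_lhs => rw [show m = (m - 1) + 1 by omega, pow_succ]
    ring
  have hns : N + (-1 : F) ^ (m - 1) ≠ 0 := by
    intro h
    apply hcond
    have hNeq : N = (-1 : F) ^ m := by rw [hm1]; linear_combination h
    rw [hNeq, ← pow_add, ← two_mul, pow_mul]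
    norm_num
  set c : F := N / (N + (-1 : F) ^ (m - 1)) with hc
  have main : ∀ y : F,
      (c * ∑ i ∈ Finset.range m,
          (-1 : F) ^ i * a⁻¹ ^ ((q ^ ((i + 1) * r) - 1) / (q ^ r - 1)) * y ^ q ^ (i * r))
          ^ q ^ r
        + a * (c * ∑ i ∈ Finset.range m,
          (-1 : F) ^ i * a⁻¹ ^ ((q ^ ((i + 1) * r) - 1) / (q ^ r - 1)) * y ^ q ^ (i * r))
        = y := by
    intro y
    -- the sum with cleaned-up exponents
    have hSrw : (∑ i ∈ Finset.range m,
        (-1 : F) ^ i * a⁻¹ ^ ((q ^ ((i + 1) * r) - 1) / (q ^ r - 1)) * y ^ q ^ (i * r))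
        = ∑ i ∈ Finset.range m, (-1 : F) ^ i * a⁻¹ ^ (E (i + 1)) * y ^ q ^ (i * r) :=
      Finset.sum_congr rfl (fun i _ => by rw [hdiv i])
    set S := ∑ i ∈ Finset.range m, (-1 : F) ^ i * a⁻¹ ^ (E (i + 1)) * y ^ q ^ (i * r) with hSdef
    set g : ℕ → F := fun i => (-1 : F) ^ i * a⁻¹ ^ (E (i + 1) - 1) * y ^ q ^ (i * r) with hg
    have claim1 : ∀ i : ℕ,
        a * ((-1 : F) ^ i * a⁻¹ ^ (E (i + 1)) * y ^ q ^ (i * r)) = g i := by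
      intro i
      have h1 : E (i + 1) = (E (i + 1) - 1) + 1 := by have := hEpos i; omega
      rw [hg]
      simp only
      rw [h1, pow_succ, Nat.add_sub_cancel]
      field_simp
    have claim2 : ∀ i : ℕ,
        φ ((-1 : F) ^ i * a⁻¹ ^ (E (i + 1)) * y ^ q ^ (i * r)) = - g (i + 1) := by
      intro i
      rw [hφ, mul_pow, mul_pow]
      have h1 : ((-1 : F) ^ i) ^ q ^ r = (-1 : F) ^ i := by
        rw [← pow_mul, mul_comm, pow_mul]
        have : (-1 : F) ^ q ^ r = -1 := by
          have := hφ (-1 : F)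
          rw [map_neg, map_one] at this
          exact this.symm
        rw [this]
      have h2 : (a⁻¹ ^ E (i + 1)) ^ q ^ r = a⁻¹ ^ (E (i + 1 + 1) - 1) := by
        rw [← pow_mul]
        congr 1
        have := hEstep (i + 1)
        omega
      have h3 : (y ^ q ^ (i * r)) ^ q ^ r = y ^ q ^ ((i + 1) * r) := by
        rw [← pow_mul, ← pow_add]
        congr 2
        ring
      rw [h1, h2, h3, hg]
      simp only
      rw [pow_succ]
      ring_nf
    have claim3 : g 0 = y := by simp [hg, hE1]
    have claim4 : g m = (-1 : F) ^ m * N⁻¹ * y := by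
      rw [hg]
      simp only
      have h1 : E (m + 1) - 1 = E m * q ^ r := by have := hEstep m; omega
      rw [h1, pow_mul, inv_pow, hEm, inv_pow, hNfrob, hzmr y]
    -- the main telescoping identity
    have hLS : S ^ q ^ r + a * S = y - (-1 : F) ^ m * N⁻¹ * y := by
      have hφS : S ^ q ^ r = ∑ i ∈ Finset.range m,
          φ ((-1 : F) ^ i * a⁻¹ ^ (E (i + 1)) * y ^ q ^ (i * r)) := by
        rw [← hφ, hSdef, map_sum]
      rw [hφS, Finset.mul_sum, ← Finset.sum_add_distrib]
      calc (∑ i ∈ Finset.range m,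
            (φ ((-1 : F) ^ i * a⁻¹ ^ (E (i + 1)) * y ^ q ^ (i * r))
              + a * ((-1 : F) ^ i * a⁻¹ ^ (E (i + 1)) * y ^ q ^ (i * r))))
          = ∑ i ∈ Finset.range m, (g i - g (i + 1)) := by
            apply Finset.sum_congr rfl
            intro i _
            rw [claim1 i, claim2 i]
            ring
        _ = g 0 - g m := Finset.sum_range_sub' g m
        _ = y - (-1 : F) ^ m * N⁻¹ * y := by rw [claim3, claim4]
    -- the coefficient is Frobenius-fixed
    have hφc : c ^ q ^ r = c := by
      rw [hc, ← hφ, map_div₀, map_add, hφN, map_pow, map_neg, map_one]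
    -- part 1
    have part1 : (c * S) ^ q ^ r + a * (c * S) = y := by
      rw [mul_pow, hφc]
      have : c * S ^ q ^ r + a * (c * S) = c * (S ^ q ^ r + a * S) := by ring
      rw [this, hLS, hm1, hc]
      field_simp
      ring
    rw [hSrw]
    exact part1
  intro y
  refine ⟨main y, ?_⟩
  intro x hx
  have hsurj : Function.Surjective (fun z : F => z ^ q ^ r + a * z) :=
    fun w => ⟨_, main w⟩
  have hinj : Function.Injective (fun z : F => z ^ q ^ r + a * z) :=
    Finite.injective_iff_surjective.mpr hsurj
  apply hinj
  show x ^ q ^ r + a * x =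
    (c * ∑ i ∈ Finset.range m,
        (-1 : F) ^ i * a⁻¹ ^ ((q ^ ((i + 1) * r) - 1) / (q ^ r - 1)) * y ^ q ^ (i * r))
      ^ q ^ r
    + a * (c * ∑ i ∈ Finset.range m,
        (-1 : F) ^ i * a⁻¹ ^ ((q ^ ((i + 1) * r) - 1) / (q ^ r - 1)) * y ^ q ^ (i * r))
  rw [hx, main y]
end
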